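/- Let G be a topological group admitting a compact open subgroup K such that the set of left cosets of K in G is countable. Let k be an uncountable algebraically closed field and V an irreducible smooth representation of G over k. Then every G-equivariant k-linear endomorphism of V is multiplication by a scalar in k. -/

import Mathlib

section Defs

variable {k : Type*} [Field k] {G : Type*} [Group G] [TopologicalSpace G]
variable {V : Type*} [AddCommGroup V] [Module k V]

/-- A representation of a topological group is smooth if the stabilizer of every
vector is an open subset. -/
def IsSmoothRep (ρ : Representation k G V) : Prop :=
  ∀ v : V, IsOpen {g : G | ρ g v = v}

/-- The subspace of vectors fixed by every element of a subset `S` of `G`. -/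
def fixedBy (ρ : Representation k G V) (S : Set G) : Submodule k V where
  carrier := {v : V | ∀ g ∈ S, ρ g v = v}
  add_mem' := by intro a b ha hb g hg; simp [map_add, ha g hg, hb g hg]
  zero_mem' := by intro g hg; simp
  smul_mem' := by intro c a ha g hg; simp [ha g hg]

/-- A subspace is `G`-stable if it is preserved by the action. -/
def IsStableRep (ρ : Representation k G V) (W : Submodule k V) : Prop :=
  ∀ g : G, ∀ v ∈ W, ρ g v ∈ W

/-- A representation is irreducible if it is nonzero and its only `G`-stable
subspaces are `⊥` and `⊤`. -/
def IsIrreducibleRep (ρ : Representation k G V) : Prop :=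
  (∃ v : V, v ≠ 0) ∧ ∀ W : Submodule k V, IsStableRep ρ W → W = ⊥ ∨ W = ⊤

/-- A representation is admissible if it is smooth and its fixed vectors under every
open subgroup form a finite-dimensional space. -/
def IsAdmissibleRep (ρ : Representation k G V) : Prop :=
  IsSmoothRep ρ ∧
    ∀ J : Subgroup G, IsOpen (J : Set G) → FiniteDimensional k ↥(fixedBy ρ (J : Set G))

/-- A (profinite) topological group is pro-`p` if every open normal subgroup has
index a power of `p`. -/
def IsProP (p : ℕ) (G : Type*) [Group G] [TopologicalSpace G] : Prop :=
  ∀ N : Subgroup G, N.Normal → IsOpen (N : Set G) → ∃ n : ℕ, N.index = p ^ n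

end Defs


open Polynomial

private theorem statement7_aux_aeval_inj {k : Type*} [Field k] [IsAlgClosed k] {V : Type*}
    [AddCommGroup V] [Module k V] (f : Module.End k V)
    (hinj : ∀ c : k, Function.Injective (f - c • (1 : Module.End k V))) :
    ∀ (n : ℕ) (q : k[X]), q.natDegree ≤ n → q ≠ 0 → Function.Injective (aeval f q) := by
  intro n
  induction n with
  | zero =>
    intro q hq hq0
    have h0 : q.natDegree = 0 := Nat.le_zero.mp hq
    obtain ⟨a, rfl⟩ := Polynomial.natDegree_eq_zero.mp h0
    have ha : a ≠ 0 := fun h => hq0 (by simp [h])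
    intro x y hxy
    simp only [aeval_C, Module.algebraMap_end_apply] at hxy
    exact smul_right_injective V ha hxy
  | succ n ih =>
    intro q hq hq0
    by_cases hqn : q.natDegree ≤ n
    · exact ih q hqn hq0
    · have hdeg : q.degree ≠ 0 := by
        intro h
        have := Polynomial.natDegree_eq_zero_iff_degree_le_zero.mpr (le_of_eq h)
        omega
      obtain ⟨r, hr⟩ := IsAlgClosed.exists_root q hdeg
      obtain ⟨q', hq'⟩ := Polynomial.dvd_iff_isRoot.mpr hr
      have hq'0 : q' ≠ 0 := by rintro rfl; simp at hq'; exact hq0 hq'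
      have hxr : (X - C r : k[X]) ≠ 0 := Polynomial.X_sub_C_ne_zero r
      have hdn : q'.natDegree ≤ n := by
        have h2 := Polynomial.natDegree_mul hxr hq'0
        rw [hq'] at hq
        rw [h2, Polynomial.natDegree_X_sub_C] at hq
        omega
      rw [hq', map_mul]
      have h1 : aeval f (X - C r : k[X]) = f - r • 1 := by
        simp [map_sub, Algebra.algebraMap_eq_smul_one]
      intro x y hxy
      simp only [Module.End.mul_apply] at hxy
      rw [h1] at hxy
      exact ih q' hdn hq'0 (hinj r hxy)

private theorem statement7_orbit_countable {k : Type*} [Field k] {G : Type*} [Group G]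
    [TopologicalSpace G] [IsTopologicalGroup G] {V : Type*} [AddCommGroup V] [Module k V]
    (K : Subgroup G) (hKc : IsCompact (K : Set G)) (hcount : Countable (G ⧸ K))
    (ρ : Representation k G V) (v₀ : V) (hsm : IsOpen {g : G | ρ g v₀ = v₀}) :
    (Set.range fun g : G => ρ g v₀).Countable := by
  have key : ∀ h g : G, h⁻¹ * g ∈ {g : G | ρ g v₀ = v₀} ↔ ρ g v₀ = ρ h v₀ := by
    intro h g
    constructor
    · intro e
      have := congrArg (ρ h) e
      rw [← Module.End.mul_apply, ← map_mul, mul_inv_cancel_left] at this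
      exact this
    · intro e
      show ρ (h⁻¹ * g) v₀ = v₀
      rw [map_mul, Module.End.mul_apply, e, ← Module.End.mul_apply, ← map_mul,
        inv_mul_cancel, map_one, Module.End.one_apply]
  have hU : ∀ h : G, IsOpen {g : G | ρ g v₀ = ρ h v₀} := by
    intro h
    have : {g : G | ρ g v₀ = ρ h v₀} = (fun g => h⁻¹ * g) ⁻¹' {g : G | ρ g v₀ = v₀} := by
      ext g; simp only [Set.mem_preimage, Set.mem_setOf_eq]; exact (key h g).symm
    rw [this]
    exact hsm.preimage (continuous_const.mul continuous_id)
  obtain ⟨t, ht⟩ := hKc.elim_finite_subcover (fun h : G => {g : G | ρ g v₀ = ρ h v₀}) hU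
    (fun g _ => Set.mem_iUnion.mpr ⟨g, rfl⟩)
  have hKfin : ((fun g : G => ρ g v₀) '' (K : Set G)).Finite := by
    apply Set.Finite.subset (t.finite_toSet.image fun h => ρ h v₀)
    rintro _ ⟨g, hg, rfl⟩
    obtain ⟨h, hh, hgh⟩ := Set.mem_iUnion₂.mp (ht hg)
    exact ⟨h, hh, hgh.symm⟩
  have hsub : (Set.range fun g : G => ρ g v₀) ⊆
      ⋃ q : G ⧸ K, (fun w => ρ q.out w) '' ((fun g : G => ρ g v₀) '' (K : Set G)) := by
    rintro _ ⟨g, rfl⟩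
    apply Set.mem_iUnion.mpr
    refine ⟨QuotientGroup.mk g, ?_⟩
    obtain ⟨h, hh⟩ := QuotientGroup.mk_out_eq_mul K g
    refine ⟨ρ (h : G)⁻¹ v₀, ⟨(h : G)⁻¹, (K.inv_mem h.2 : _), rfl⟩, ?_⟩
    show ρ (Quotient.out _) (ρ (h : G)⁻¹ v₀) = ρ g v₀
    rw [← Module.End.mul_apply, ← map_mul, hh, mul_assoc, mul_inv_cancel, mul_one]
  exact Set.Countable.mono hsub
    (Set.countable_iUnion fun q => (hKfin.image _).countable)

/-- if `G` has a compact open subgroup with countably many left cosets and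
`k` is uncountable algebraically closed, then every `G`-equivariant endomorphism of an
irreducible smooth representation of `G` over `k` is a scalar. -/
theorem statement7 {G : Type*} [Group G] [TopologicalSpace G] [IsTopologicalGroup G]
    (K : Subgroup G) (hKc : IsCompact (K : Set G)) (hKo : IsOpen (K : Set G))
    (hcount : Countable (G ⧸ K))
    {k : Type*} [Field k] [IsAlgClosed k] [Uncountable k]
    {V : Type*} [AddCommGroup V] [Module k V]
    (ρ : Representation k G V) (hsm : IsSmoothRep ρ) (hirr : IsIrreducibleRep ρ)
    (f : V →ₗ[k] V) (hf : ∀ (g : G) (v : V), f (ρ g v) = ρ g (f v)) :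
    ∃ c : k, ∀ v : V, f v = c • v := by
  classical
  obtain ⟨⟨v₀, hv₀⟩, hstab⟩ := hirr
  -- the operators f - c • id commute with the action
  set L : k → Module.End k V := fun c => f - c • (1 : Module.End k V) with hL
  have hLapp : ∀ c v, L c v = f v - c • v := by intro c v; simp [hL]
  have hLcomm : ∀ (c : k) (g : G) (v : V), L c (ρ g v) = ρ g (L c v) := by
    intro c g v
    simp [hLapp, hf, map_sub, map_smul]
  by_cases hker : ∃ c : k, LinearMap.ker (L c) ≠ ⊥
  · -- some kernel nonzero: it is stable, hence everything, so f = c • id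
    obtain ⟨c, hc⟩ := hker
    have hstable : IsStableRep ρ (LinearMap.ker (L c)) := by
      intro g v hv
      rw [LinearMap.mem_ker] at hv ⊢
      rw [hLcomm, hv, map_zero]
    rcases hstab _ hstable with h | h
    · exact absurd h hc
    · refine ⟨c, fun v => ?_⟩
      have : L c v = 0 := by
        have : v ∈ LinearMap.ker (L c) := h ▸ Submodule.mem_top
        exact LinearMap.mem_ker.mp this
      rw [hLapp] at this
      exact sub_eq_zero.mp this
  · push_neg at hker
    exfalso
    have hinj : ∀ c : k, Function.Injective (L c) := by
      intro c
      rw [← LinearMap.ker_eq_bot]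
      exact hker c
    -- each L c is surjective
    have hsurj : ∀ c : k, Function.Surjective (L c) := by
      intro c
      have hstable : IsStableRep ρ (LinearMap.range (L c)) := by
        rintro g _ ⟨v, rfl⟩
        exact ⟨ρ g v, (hLcomm c g v)⟩
      rcases hstab _ hstable with h | h
      · exfalso
        have : L c v₀ ∈ LinearMap.range (L c) := ⟨v₀, rfl⟩
        rw [h, Submodule.mem_bot] at this
        exact hv₀ (hinj c (by rw [this, map_zero]))
      · intro w
        have : w ∈ LinearMap.range (L c) := h ▸ Submodule.mem_top
        exact this
    -- resolvent family
    choose w hw using fun c : k => hsurj c v₀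
    -- V has countable rank
    have hO : (Set.range fun g : G => ρ g v₀).Countable :=
      statement7_orbit_countable K hKc hcount ρ v₀ (hsm v₀)
    set O : Set V := Set.range fun g : G => ρ g v₀ with hOdef
    have hspan : Submodule.span k O = ⊤ := by
      have hstable : IsStableRep ρ (Submodule.span k O) := by
        intro g v hv
        have h1 : Submodule.map (ρ g) (Submodule.span k O) ≤ Submodule.span k O := by
          rw [Submodule.map_span]
          apply Submodule.span_mono
          rintro _ ⟨_, ⟨h, rfl⟩, rfl⟩
          exact ⟨g * h, by simp [map_mul]⟩
        exact h1 ⟨v, hv, rfl⟩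
      rcases hstab _ hstable with h | h
      · exfalso
        have : v₀ ∈ Submodule.span k O :=
          Submodule.subset_span ⟨1, by simp⟩
        rw [h, Submodule.mem_bot] at this
        exact hv₀ this
      · exact h
    have hrank : Module.rank k V ≤ Cardinal.aleph0 := by
      have h1 := rank_span_le (R := k) O
      rw [hspan] at h1
      rw [rank_top] at h1
      refine h1.trans ?_
      have := hO.to_subtype
      exact Cardinal.mk_le_aleph0
    -- w is not linearly independent
    have hnli : ¬ LinearIndependent k w := by
      intro hli
      have h1 := hli.cardinal_lift_le_rank
      have h2 : Cardinal.lift.{_} (Module.rank k V) ≤ Cardinal.aleph0 := by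
        rw [Cardinal.lift_le_aleph0]; exact hrank
      have h3 : Cardinal.mk k ≤ Cardinal.aleph0 :=
        Cardinal.lift_le_aleph0.mp (h1.trans h2)
      exact absurd h3 (not_le.mpr (Cardinal.aleph0_lt_mk (α := k)))
    rw [linearIndependent_iff'] at hnli
    push_neg at hnli
    obtain ⟨s, a, hsum, i, his, hai⟩ := hnli
    -- build the polynomial
    set q : Polynomial k := ∑ c ∈ s, C (a c) * ∏ c' ∈ s.erase c, (X - C c') with hq
    have hq0 : q ≠ 0 := by
      intro h
      have he : q.eval i = 0 := by rw [h]; simp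
      rw [hq] at he
      rw [Polynomial.eval_finset_sum] at he
      have hone : ∀ c ∈ s, c ≠ i →
          (C (a c) * ∏ c' ∈ s.erase c, (X - C c')).eval i = 0 := by
        intro c hc hci
        rw [Polynomial.eval_mul, Polynomial.eval_prod]
        have : i ∈ s.erase c := Finset.mem_erase.mpr ⟨Ne.symm hci, his⟩
        rw [Finset.prod_eq_zero this (by simp)]
        ring
      rw [Finset.sum_eq_single i (fun c hc hci => hone c hc hci) (fun h => absurd his h)] at he
      rw [Polynomial.eval_mul, Polynomial.eval_prod] at he
      simp only [Polynomial.eval_C] at he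
      rcases mul_eq_zero.mp he with h | h
      · exact hai h
      · obtain ⟨c', hc', hc0⟩ := Finset.prod_eq_zero_iff.mp h
        simp only [Polynomial.eval_sub, Polynomial.eval_X, Polynomial.eval_C, sub_eq_zero] at hc0
        exact (Finset.mem_erase.mp hc').1 hc0.symm
    -- aeval f q v₀ = 0
    have haevalL : ∀ c : k, Polynomial.aeval f (X - C c : Polynomial k) = L c := by
      intro c; simp [hL, map_sub, Algebra.algebraMap_eq_smul_one]
    have hqv : Polynomial.aeval f q v₀ = 0 := by
      have hterm : ∀ c ∈ s,
          (Polynomial.aeval f (C (a c) * ∏ c' ∈ s.erase c, (X - C c'))) v₀ =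
            (Polynomial.aeval f (∏ c' ∈ s, (X - C c'))) (a c • w c) := by
        intro c hc
        have h1 : (C (a c) * ∏ c' ∈ s.erase c, (X - C c')) * (X - C c) =
            C (a c) * ∏ c' ∈ s, (X - C c') := by
          rw [mul_assoc, Finset.prod_erase_mul _ _ hc]
        conv_lhs => rw [show v₀ = (Polynomial.aeval f (X - C c : Polynomial k)) (w c) by
          rw [haevalL, hw]]
        rw [← Module.End.mul_apply, ← map_mul, h1, map_mul, Polynomial.aeval_C,
          Module.End.mul_apply, Module.algebraMap_end_apply, ← map_smul]
      rw [hq, map_sum]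
      rw [LinearMap.coe_sum, Finset.sum_apply]
      rw [Finset.sum_congr rfl hterm]
      rw [← map_sum, hsum, map_zero]
    exact hv₀ (statement7_aux_aeval_inj f hinj q.natDegree q le_rfl hq0
      (by rw [hqv, map_zero]))
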